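/- Let n, m, r, s be integers with 0 ≤ n < m and r + s = m, and let i0 be an integer with 1 ≤ i0 ≤ n+1. Let η : {0, 1, …, n} → {±1} be any function. For each i ∈ {1, …, n+1} with i ≠ i0 define r_i = 1 if either (i < i0 and η(i) = (−1)^{i−1}) or (i > i0 and η(i−1) = (−1)^{i+m−n−2}), and r_i = 0 otherwise; set s_i = 1 − r_i. Define the integers r_{i0} = r − Σ_{i≠i0} r_i and s_{i0} = s − Σ_{i≠i0} s_i. Then η(1)·η(2)⋯η(n)·η(0) = (−1)^{(r−s)(r−s−1)/2} if and only if η(0) = (−1)^{r_{i0}(i0−1) + s_{i0}·i0 + (m−n)(m−n−1)/2}. (Here (r−s)(r−s−1) and (m−n)(m−n−1) are even, so both exponents are integers, and (−1)^k for an integer k, possibly negative, means the sign of the parity of k.) -/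

import Mathlib

lemma aux_prod_negOnePow (t : Finset ℕ) (f : ℕ → ℤ) :
    ∏ i ∈ t, (Int.negOnePow (f i) : ℤ) = (Int.negOnePow (∑ i ∈ t, f i) : ℤ) := by
  induction t using Finset.cons_induction with
  | empty => simp
  | cons a t ha ih =>
      rw [Finset.prod_cons, Finset.sum_cons, ih, Int.negOnePow_add, Units.val_mul]

lemma aux_gauss (k : ℕ) : 2 * ∑ i ∈ Finset.Icc 1 k, (i : ℤ) = (k : ℤ) * ((k : ℤ) + 1) := by
  induction k with
  | zero => simp
  | succ k ih =>
      rw [Finset.sum_Icc_succ_top (by omega)]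
      push_cast
      push_cast at ih
      linarith

lemma aux_sign_helper (x : ℤ) (hx : x = 1 ∨ x = -1) (k : ℕ) (hk : 1 ≤ k) :
    ((Int.negOnePow (if x = (-1 : ℤ) ^ (k - 1) then 1 else 0) : ℤ)) * x = (-1 : ℤ) ^ k := by
  obtain ⟨j, rfl⟩ : ∃ j, k = j + 1 := ⟨k - 1, by omega⟩
  simp only [Nat.add_sub_cancel, pow_succ]
  have hpow : (-1 : ℤ) ^ j = 1 ∨ (-1 : ℤ) ^ j = -1 := by
    rcases Nat.even_or_odd j with hj | hj
    · exact Or.inl hj.neg_one_pow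
    · exact Or.inr hj.neg_one_pow
  by_cases h : x = (-1 : ℤ) ^ j
  · rw [if_pos h, h]
    have : (Int.negOnePow 1 : ℤ) = -1 := by
      rw [Int.negOnePow_one]; rfl
    rw [this]; ring
  · rw [if_neg h]
    have : (Int.negOnePow 0 : ℤ) = 1 := by rw [Int.negOnePow_zero]; rfl
    rw [this, one_mul]
    rcases hx with h1 | h1 <;> rcases hpow with h2 | h2 <;>
      rw [h1] at h ⊢ <;> rw [h2] at h ⊢ <;> first | exact absurd rfl h | norm_num

lemma aux_unit_shift {u x y : ℤ} (hu : u * u = 1) : u * x = y ↔ x = u * y := by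
  constructor
  · rintro rfl; rw [← mul_assoc, hu, one_mul]
  · rintro rfl; rw [← mul_assoc, hu, one_mul]

/-- Lemma 5.2 of the paper (combinatorial form): the relevance condition
`η'(e'_1 + ⋯ + e'_n + e'_0) = (−1)^{(r−s)(r−s−1)/2}` is equivalent to
`η'(e'_0) = (−1)^{r_{i0}(i0−1) + s_{i0} i0 + (m−n)(m−n−1)/2}`. -/
theorem stmt0 (n m : ℕ) (r s : ℤ) (i0 : ℕ)
    (hnm : n < m) (hrs : r + s = (m : ℤ))
    (hi0l : 1 ≤ i0) (hi0u : i0 ≤ n + 1)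
    (η : ℕ → ℤ) (hη : ∀ i ≤ n, η i = 1 ∨ η i = -1)
    (rr ss : ℕ → ℤ)
    (hrr : ∀ i, 1 ≤ i → i ≤ n + 1 → i ≠ i0 →
      rr i = if ((i < i0 ∧ η i = (-1 : ℤ) ^ (i - 1)) ∨
          (i0 < i ∧ η (i - 1) = (-1 : ℤ) ^ (i + m - n - 2))) then 1 else 0)
    (hss : ∀ i, 1 ≤ i → i ≤ n + 1 → i ≠ i0 → ss i = 1 - rr i)
    (ri0 si0 : ℤ)
    (hri0 : ri0 = r - ∑ i ∈ (Finset.Icc 1 (n + 1)).erase i0, rr i)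
    (hsi0 : si0 = s - ∑ i ∈ (Finset.Icc 1 (n + 1)).erase i0, ss i) :
    (∏ i ∈ Finset.Icc 1 n, η i) * η 0 =
        (Int.negOnePow ((r - s) * (r - s - 1) / 2) : ℤ) ↔
      η 0 = (Int.negOnePow (ri0 * ((i0 : ℤ) - 1) + si0 * (i0 : ℤ) +
        ((m : ℤ) - (n : ℤ)) * ((m : ℤ) - (n : ℤ) - 1) / 2) : ℤ) := by
  set t : Finset ℕ := (Finset.Icc 1 (n + 1)).erase i0 with ht
  set T1 : Finset ℕ := Finset.Ico 1 i0 with hT1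
  set T2 : Finset ℕ := Finset.Icc (i0 + 1) (n + 1) with hT2
  set R : ℤ := ∑ i ∈ t, rr i with hR
  set P : ℤ := ∏ i ∈ Finset.Icc 1 n, η i with hPdef
  -- split t
  have htT : t = T1 ∪ T2 := by
    ext x
    simp only [ht, hT1, hT2, Finset.mem_erase, Finset.mem_Icc, Finset.mem_Ico,
      Finset.mem_union]
    omega
  have hdisj : Disjoint T1 T2 := by
    rw [Finset.disjoint_left]
    intro a ha hb
    simp only [hT1, hT2, Finset.mem_Ico, Finset.mem_Icc] at ha hb
    omega
  -- per-element identities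
  have e1 : ∀ i ∈ T1, (Int.negOnePow (rr i) : ℤ) * η i = (Int.negOnePow ((i : ℤ)) : ℤ) := by
    intro i hi
    simp only [hT1, Finset.mem_Ico] at hi
    have hrri : rr i = if η i = (-1 : ℤ) ^ (i - 1) then 1 else 0 := by
      rw [hrr i hi.1 (by omega) (by omega)]
      apply if_congr _ rfl rfl
      constructor
      · rintro (⟨_, h⟩ | ⟨h, _⟩)
        · exact h
        · omega
      · intro h; exact Or.inl ⟨hi.2, h⟩
    rw [hrri, aux_sign_helper (η i) (hη i (by omega)) i hi.1,
      Int.coe_negOnePow_natCast]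
  have e2 : ∀ i ∈ T2, (Int.negOnePow (rr i) : ℤ) * η (i - 1) =
      (Int.negOnePow ((i : ℤ) + (m : ℤ) - (n : ℤ) - 1) : ℤ) := by
    intro i hi
    simp only [hT2, Finset.mem_Icc] at hi
    have hrri : rr i = if η (i - 1) = (-1 : ℤ) ^ ((i + m - n - 1) - 1) then 1 else 0 := by
      rw [hrr i (by omega) hi.2 (by omega)]
      have hexp : i + m - n - 2 = (i + m - n - 1) - 1 := by omega
      rw [hexp]
      apply if_congr _ rfl rfl
      constructor
      · rintro (⟨h, _⟩ | ⟨_, h⟩)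
        · omega
        · exact h
      · intro h; exact Or.inr ⟨by omega, h⟩
    have hcast : (i : ℤ) + (m : ℤ) - (n : ℤ) - 1 = ((i + m - n - 1 : ℕ) : ℤ) := by
      omega
    rw [hrri, aux_sign_helper (η (i - 1)) (hη (i - 1) (by omega)) (i + m - n - 1) (by omega),
      hcast, Int.coe_negOnePow_natCast]
  -- reindexing for the product of η over Icc i0 n
  have hmap : T2 = Finset.map ⟨fun j => j + 1, add_left_injective 1⟩ (Finset.Icc i0 n) := by
    ext x
    simp only [hT2, Finset.mem_Icc, Finset.mem_map, Function.Embedding.coeFn_mk]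
    constructor
    · intro hx; exact ⟨x - 1, by omega, by omega⟩
    · rintro ⟨j, hj, rfl⟩; omega
  have hprod2 : ∏ i ∈ T2, η (i - 1) = ∏ j ∈ Finset.Icc i0 n, η j := by
    rw [hmap, Finset.prod_map]
    simp
  -- splitting of P
  have hPsplit : P = (∏ i ∈ T1, η i) * ∏ i ∈ T2, η (i - 1) := by
    rw [hprod2, hPdef]
    have : Finset.Icc 1 n = T1 ∪ Finset.Icc i0 n := by
      ext x
      simp only [hT1, Finset.mem_Icc, Finset.mem_Ico, Finset.mem_union]
      omega
    rw [this, Finset.prod_union]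
    rw [Finset.disjoint_left]
    intro a ha hb
    simp only [hT1, Finset.mem_Ico, Finset.mem_Icc] at ha hb
    omega
  -- sums
  set S1 : ℤ := ∑ i ∈ T1, (i : ℤ) with hS1def
  set S2 : ℤ := ∑ i ∈ T2, (i : ℤ) with hS2def
  set G : ℤ := S1 + S2 + ((n : ℤ) + 1 - (i0 : ℤ)) * ((m : ℤ) - (n : ℤ) - 1) with hGdef
  have hG2sum : ∑ i ∈ T2, ((i : ℤ) + (m : ℤ) - (n : ℤ) - 1) =
      S2 + ((n : ℤ) + 1 - (i0 : ℤ)) * ((m : ℤ) - (n : ℤ) - 1) := by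
    have hcard : ((T2.card : ℤ)) = (n : ℤ) + 1 - (i0 : ℤ) := by
      rw [hT2, Nat.card_Icc]
      omega
    calc ∑ i ∈ T2, ((i : ℤ) + (m : ℤ) - (n : ℤ) - 1)
        = ∑ i ∈ T2, ((i : ℤ) + ((m : ℤ) - (n : ℤ) - 1)) := by
          apply Finset.sum_congr rfl; intro i _; ring
      _ = S2 + T2.card • ((m : ℤ) - (n : ℤ) - 1) := by
          rw [Finset.sum_add_distrib, Finset.sum_const]
      _ = S2 + ((n : ℤ) + 1 - (i0 : ℤ)) * ((m : ℤ) - (n : ℤ) - 1) := by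
          rw [nsmul_eq_mul, hcard]
  -- the key product identity
  have key : (Int.negOnePow R : ℤ) * P = (Int.negOnePow G : ℤ) := by
    have h1 : (Int.negOnePow R : ℤ) = ∏ i ∈ t, (Int.negOnePow (rr i) : ℤ) := by
      rw [aux_prod_negOnePow, hR]
    rw [h1, hPsplit, htT, Finset.prod_union hdisj, mul_mul_mul_comm,
      ← Finset.prod_mul_distrib, ← Finset.prod_mul_distrib,
      Finset.prod_congr rfl e1, Finset.prod_congr rfl e2,
      aux_prod_negOnePow, aux_prod_negOnePow, hG2sum, ← Units.val_mul,
      ← Int.negOnePow_add, hGdef, hS1def, add_assoc]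
  have hP : P = (Int.negOnePow (R + G) : ℤ) := by
    have hu : (Int.negOnePow R : ℤ) * (Int.negOnePow R : ℤ) = 1 := by
      rw [← Units.val_mul, Int.units_mul_self, Units.val_one]
    calc P = ((Int.negOnePow R : ℤ) * (Int.negOnePow R : ℤ)) * P := by rw [hu, one_mul]
      _ = (Int.negOnePow R : ℤ) * ((Int.negOnePow R : ℤ) * P) := by ring
      _ = (Int.negOnePow R : ℤ) * (Int.negOnePow G : ℤ) := by rw [key]
      _ = (Int.negOnePow (R + G) : ℤ) := by rw [Int.negOnePow_add R G, Units.val_mul]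
  have hPP : P * P = 1 := by
    rw [hP, ← Units.val_mul, Int.units_mul_self, Units.val_one]
  -- Gauss sums
  have hS1 : 2 * S1 = (i0 : ℤ) * ((i0 : ℤ) - 1) := by
    have hIco : T1 = Finset.Icc 1 (i0 - 1) := by
      ext x; simp only [hT1, Finset.mem_Ico, Finset.mem_Icc]; omega
    have := aux_gauss (i0 - 1)
    rw [hS1def, hIco, this]
    push_cast [hi0l]
    ring
  have hS2 : 2 * S2 = ((n : ℤ) + 1) * ((n : ℤ) + 2) - (i0 : ℤ) * ((i0 : ℤ) + 1) := by
    have hsplit : Finset.Icc 1 (n + 1) = Finset.Icc 1 i0 ∪ T2 := by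
      ext x; simp only [hT2, Finset.mem_Icc, Finset.mem_union]; omega
    have hd : Disjoint (Finset.Icc 1 i0) T2 := by
      rw [Finset.disjoint_left]
      intro a ha hb
      simp only [hT2, Finset.mem_Icc] at ha hb
      omega
    have h1 := aux_gauss (n + 1)
    have h2 := aux_gauss i0
    rw [hsplit, Finset.sum_union hd] at h1
    push_cast at h1 h2 ⊢
    linarith
  -- halved quantities
  have hk1 : 2 * ((r - s) * (r - s - 1) / 2) = (r - s) * (r - s - 1) := by
    rw [Int.mul_ediv_cancel' (Int.even_mul_pred_self (r - s)).two_dvd]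
  have hk2 : 2 * (((m : ℤ) - (n : ℤ)) * ((m : ℤ) - (n : ℤ) - 1) / 2) =
      ((m : ℤ) - (n : ℤ)) * ((m : ℤ) - (n : ℤ) - 1) := by
    rw [Int.mul_ediv_cancel' (Int.even_mul_pred_self ((m : ℤ) - (n : ℤ))).two_dvd]
  obtain ⟨k3, hk3⟩ : ∃ k3 : ℤ, (m : ℤ) * ((m : ℤ) + 1) = 2 * k3 := by
    obtain ⟨c, hc⟩ := Int.even_mul_succ_self (m : ℤ)
    exact ⟨c, by linarith⟩
  set k1 : ℤ := (r - s) * (r - s - 1) / 2 with hk1def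
  set k2 : ℤ := ((m : ℤ) - (n : ℤ)) * ((m : ℤ) - (n : ℤ) - 1) / 2 with hk2def
  -- sum of ss
  have hS : ∑ i ∈ t, ss i = (n : ℤ) - R := by
    have hcongr : ∑ i ∈ t, ss i = ∑ i ∈ t, (1 - rr i) := by
      apply Finset.sum_congr rfl
      intro i hi
      simp only [ht, Finset.mem_erase, Finset.mem_Icc] at hi
      exact hss i hi.2.1 hi.2.2 hi.1
    have hcardt : (t.card : ℤ) = (n : ℤ) := by
      rw [ht, Finset.card_erase_of_mem (by simp [Finset.mem_Icc]; omega), Nat.card_Icc]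
      omega
    rw [hcongr, Finset.sum_sub_distrib, Finset.sum_const, nsmul_eq_mul, mul_one, hcardt, hR]
  -- the main sign identity
  have hE : ri0 * ((i0 : ℤ) - 1) + si0 * (i0 : ℤ) + k2 =
      (r - R) * ((i0 : ℤ) - 1) + (s - ((n : ℤ) - R)) * (i0 : ℤ) + k2 := by
    rw [hri0, hsi0, hS]
  have heven : Even ((R + G + k1) -
      ((r - R) * ((i0 : ℤ) - 1) + (s - ((n : ℤ) - R)) * (i0 : ℤ) + k2)) := by
    refine ⟨k3 - k2 - (i0 : ℤ) * ((m : ℤ) - (n : ℤ)) + r ^ 2 - r * (m : ℤ), ?_⟩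
    have h2 : 2 * ((R + G + k1) -
        ((r - R) * ((i0 : ℤ) - 1) + (s - ((n : ℤ) - R)) * (i0 : ℤ) + k2)) =
        2 * ((k3 - k2 - (i0 : ℤ) * ((m : ℤ) - (n : ℤ)) + r ^ 2 - r * (m : ℤ)) +
          (k3 - k2 - (i0 : ℤ) * ((m : ℤ) - (n : ℤ)) + r ^ 2 - r * (m : ℤ))) := by
      rw [hGdef]
      linear_combination hS1 + hS2 + hk1 + hk2 + 2 * hk3 +
        ((m : ℤ) - 3 * r + s + 1 - 2 * (i0 : ℤ)) * hrs
    linarith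
  have hmain : P * (Int.negOnePow k1 : ℤ) =
      (Int.negOnePow (ri0 * ((i0 : ℤ) - 1) + si0 * (i0 : ℤ) + k2) : ℤ) := by
    rw [hP, ← Units.val_mul, ← Int.negOnePow_add, hE]
    congr 1
    rw [Int.negOnePow_eq_iff]
    exact heven
  rw [aux_unit_shift hPP, hmain]
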